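/- Proposition (zero forcing characterization of strong structural controllability): For a pattern matrix A ∈ {0, ×}^{n×n} and S ⊆ {x₁, …, x_n}, the structured pair (A, B(S)) is strongly structurally controllable if and only if (1) S is a zero forcing set of G(A), and (2) there exists a chronological list of forces from S in G(A_×) whose final black set is all of V and which contains no force of the form x → x for any vertex x with A_{xx} = ×. -/

import Mathlib

open Finset
open scoped Classical

/-- One-step forcing operator of the zero forcing process in a loop directed
graph with edge relation `E` (`E u v` means there is an edge from `u` to `v`,
i.e. `v` is an out-neighbor of `u`): to the black set `B` we add every white
vertex `v` that is the unique out-neighbor, not in `B`, of some vertex `u`. -/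
noncomputable def forceStep {V : Type*} [Fintype V] (E : V → V → Prop)
    (B : Finset V) : Finset V :=
  B ∪ univ.filter fun v => v ∉ B ∧ ∃ u, E u v ∧ ∀ w, E u w → w ∉ B → w = v

/-- The zero forcing closure of `S`: iterate the one-step forcing operator
`|V|` times. -/
noncomputable def zfClosure {V : Type*} [Fintype V] (E : V → V → Prop)
    (S : Finset V) : Finset V :=
  (forceStep E)^[Fintype.card V] S

/-- One-step forcing operator of the restricted zero forcing process:
a force `u → v` with `u = v` is forbidden whenever `forbid v` holds. -/
noncomputable def forceStepR {V : Type*} [Fintype V] (E : V → V → Prop)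
    (forbid : V → Prop) (B : Finset V) : Finset V :=
  B ∪ univ.filter fun v => v ∉ B ∧
    ∃ u, E u v ∧ (∀ w, E u w → w ∉ B → w = v) ∧ ¬(u = v ∧ forbid v)

/-- The restricted zero forcing closure. -/
noncomputable def zfClosureR {V : Type*} [Fintype V] (E : V → V → Prop)
    (forbid : V → Prop) (S : Finset V) : Finset V :=
  (forceStepR E forbid)^[Fintype.card V] S

/-- `ValidForce E B u v`: from the black set `B`, vertex `u` may force the white
vertex `v`, i.e. `v ∉ B` and `v` is the unique out-neighbor of `u` not in `B`. -/
def ValidForce {V : Type*} (E : V → V → Prop) (B : Finset V) (u v : V) : Prop :=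
  v ∉ B ∧ E u v ∧ ∀ w, E u w → w ∉ B → w = v

/-- The black set obtained from `S` after applying the forces in the list `l`
(each list entry `(u, v)` records the force `u → v`). -/
noncomputable def chainSet {V : Type*} [DecidableEq V] (S : Finset V)
    (l : List (V × V)) : Finset V :=
  S ∪ (l.map Prod.snd).toFinset

/-- `l` is a chronological list of forces from `S` in the graph with edge
relation `E`: each force in the list is valid with respect to the black set
produced by the initial set `S` together with the preceding forces. -/
def IsChronList {V : Type*} [DecidableEq V] (E : V → V → Prop) (S : Finset V)
    (l : List (V × V)) : Prop :=
  ∀ k : Fin l.length, ValidForce E (chainSet S (l.take k)) (l.get k).1 (l.get k).2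

/-- Kalman controllability: the controllability matrix
`[B, AB, …, A^{n−1}B]` has full row rank `n`. -/
def Controllable {n m : ℕ} (A : Matrix (Fin n) (Fin n) ℝ)
    (B : Matrix (Fin n) (Fin m) ℝ) : Prop :=
  (Matrix.of fun i (p : Fin n × Fin m) => (A ^ (p.1 : ℕ) * B) i p.2).rank = n

/-- `(At, Bt)` is a numerical realization of the pattern pair `(A, B)`
(patterns are modelled as `Prop`-valued matrices, `A i j` meaning `A_{ij} = ×`). -/
def IsRealization {n m : ℕ} (A : Fin n → Fin n → Prop) (B : Fin n → Fin m → Prop)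
    (At : Matrix (Fin n) (Fin n) ℝ) (Bt : Matrix (Fin n) (Fin m) ℝ) : Prop :=
  (∀ i j, At i j ≠ 0 ↔ A i j) ∧ (∀ i j, Bt i j ≠ 0 ↔ B i j)

/-- Strong structural controllability: every numerical realization of the
pattern pair `(A, B)` is controllable. -/
def SControllable {n m : ℕ} (A : Fin n → Fin n → Prop)
    (B : Fin n → Fin m → Prop) : Prop :=
  ∀ (At : Matrix (Fin n) (Fin n) ℝ) (Bt : Matrix (Fin n) (Fin m) ℝ),
    IsRealization A B At Bt → Controllable At Bt

/-- The dedicated-input pattern matrix `B(S)`: it has `S.card` columns, one per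
vertex of `S`, and the column corresponding to `x_i ∈ S` is the pattern
standard basis vector `e_i`. -/
def BS {n : ℕ} (S : Finset (Fin n)) : Fin n → Fin S.card → Prop :=
  fun i j => (S.orderIsoOfFin rfl j : Fin n) = i

section Iter
variable {V : Type*} [Fintype V]

lemma subset_forceStep (E : V → V → Prop) (B : Finset V) : B ⊆ forceStep E B :=
  subset_union_left

lemma subset_forceStepR (E : V → V → Prop) (forbid : V → Prop) (B : Finset V) :
    B ⊆ forceStepR E forbid B :=
  subset_union_left

lemma subset_iterate {f : Finset V → Finset V} (hf : ∀ B, B ⊆ f B) (S : Finset V) :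
    ∀ m, S ⊆ f^[m] S := by
  intro m
  induction m with
  | zero => simp
  | succ m ih =>
      rw [Function.iterate_succ_apply']
      exact ih.trans (hf _)

lemma iterate_fix {f : Finset V → Finset V} (hf : ∀ B, B ⊆ f B) (S : Finset V) :
    f (f^[Fintype.card V] S) = f^[Fintype.card V] S := by
  set N := Fintype.card V with hN
  by_cases h : ∃ k, k ≤ N ∧ f (f^[k] S) = f^[k] S
  · obtain ⟨k, hk, he⟩ := h
    have key : f^[N] S = f^[k] S := by
      have : f^[N] S = f^[N - k] (f^[k] S) := by
        rw [← Function.iterate_add_apply]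
        congr 1
        omega
      rw [this, Function.iterate_fixed he]
    rw [key, he, ← key]
  · push_neg at h
    exfalso
    have hstrict : ∀ k, k ≤ N → f^[k] S ⊂ f^[k+1] S := by
      intro k hk
      refine ⟨by rw [Function.iterate_succ_apply']; exact hf _, ?_⟩
      intro hsub
      refine h k hk ?_
      have he : f^[k+1] S = f^[k] S :=
        le_antisymm hsub (by rw [Function.iterate_succ_apply']; exact hf _)
      calc f (f^[k] S) = f^[k+1] S := (Function.iterate_succ_apply' f k S).symm
        _ = f^[k] S := he
    have hcard : ∀ k, k ≤ N + 1 → k ≤ (f^[k] S).card := by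
      intro k hk
      induction k with
      | zero => simp
      | succ k ih =>
          have h1 := ih (by omega)
          have h2 := Finset.card_lt_card (hstrict k (by omega))
          omega
    have := hcard (N + 1) le_rfl
    have hle : (f^[N+1] S).card ≤ N := by
      rw [hN]
      exact (Finset.card_le_card (Finset.subset_univ _)).trans (le_of_eq (Finset.card_univ))
    omega

lemma mem_forceStepR_iff (E : V → V → Prop) (forbid : V → Prop) (B : Finset V) (v : V) :
    v ∈ forceStepR E forbid B ↔ v ∈ B ∨
      (v ∉ B ∧ ∃ u, E u v ∧ (∀ w, E u w → w ∉ B → w = v) ∧ ¬(u = v ∧ forbid v)) := by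
  simp [forceStepR]

lemma mem_forceStep_iff (E : V → V → Prop) (B : Finset V) (v : V) :
    v ∈ forceStep E B ↔ v ∈ B ∨
      (v ∉ B ∧ ∃ u, E u v ∧ (∀ w, E u w → w ∉ B → w = v)) := by
  simp [forceStep]

end Iter

section Chron
variable {V : Type*} [Fintype V] [DecidableEq V]

lemma chainSet_nil (S : Finset V) : chainSet S ([] : List (V × V)) = S := by
  simp [chainSet]

lemma chainSet_snoc (S : Finset V) (l : List (V × V)) (p : V × V) :
    chainSet S (l ++ [p]) = insert p.2 (chainSet S l) := by
  ext x
  simp [chainSet]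

lemma isChronList_snoc {E : V → V → Prop} {S : Finset V} {l : List (V × V)} {p : V × V} :
    IsChronList E S (l ++ [p]) ↔
      IsChronList E S l ∧ ValidForce E (chainSet S l) p.1 p.2 := by
  constructor
  · intro h
    constructor
    · intro k
      have hk : (k : ℕ) < (l ++ [p]).length := by simp
      have := h ⟨k, hk⟩
      rwa [List.take_append_of_le_length (le_of_lt k.isLt),
        show (l ++ [p]).get ⟨k, hk⟩ = l.get k from by
          simp [List.get_eq_getElem, List.getElem_append_left k.isLt]] at this
    · have hk : l.length < (l ++ [p]).length := by simp
      have := h ⟨l.length, hk⟩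
      rwa [List.take_append_of_le_length le_rfl, List.take_length,
        show (l ++ [p]).get ⟨l.length, hk⟩ = p from by
          simp [List.get_eq_getElem, List.getElem_concat_length]] at this
  · rintro ⟨h1, h2⟩ k
    rcases lt_or_eq_of_le (Nat.lt_succ_iff.mp (by simpa using k.isLt)) with hlt | heq
    · rw [List.take_append_of_le_length (by omega),
        show (l ++ [p]).get k = l.get ⟨k, hlt⟩ from by
          simp [List.get_eq_getElem, List.getElem_append_left hlt]]
      exact h1 ⟨k, hlt⟩
    · rw [show ((k : ℕ)) = l.length from heq, List.take_append_of_le_length le_rfl,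
        List.take_length,
        show (l ++ [p]).get k = p from by
          simp [List.get_eq_getElem]
          rw [List.getElem_concat_length heq]]
      exact h2

lemma isChronList_nil {E : V → V → Prop} {S : Finset V} : IsChronList E S ([] : List (V × V)) := by
  intro k
  exact absurd k.isLt (by simp)

/-- Vanishing propagates along a chronological list. -/
lemma vanish_chainSet {E : V → V → Prop} {forbid : V → Prop} {z : V → ℂ}
    (H : ∀ (B : Finset V) (u v : V), ValidForce E B u v → ¬(u = v ∧ forbid v) →
      (∀ x ∈ B, z x = 0) → z v = 0)
    {S : Finset V} {l : List (V × V)} (hl : IsChronList E S l)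
    (hfree : ∀ p ∈ l, ¬(p.1 = p.2 ∧ forbid p.2))
    (hS : ∀ x ∈ S, z x = 0) : ∀ x ∈ chainSet S l, z x = 0 := by
  induction l using List.reverseRecOn with
  | nil => simpa [chainSet_nil] using hS
  | append_singleton l p ih =>
      rw [isChronList_snoc] at hl
      have hvan := ih hl.1 (fun q hq => hfree q (by simp [hq]))
      rw [chainSet_snoc]
      intro x hx
      rcases Finset.mem_insert.mp hx with rfl | hx
      · exact H _ p.1 _ hl.2 (hfree p (by simp)) hvan
      · exact hvan x hx

/-- Vanishing propagates to the zero forcing closure. -/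
lemma vanish_zfClosure {E : V → V → Prop} {z : V → ℂ}
    (H : ∀ (B : Finset V) (u v : V), ValidForce E B u v → (∀ x ∈ B, z x = 0) → z v = 0)
    {S : Finset V} (hS : ∀ x ∈ S, z x = 0) : ∀ x ∈ zfClosure E S, z x = 0 := by
  suffices h : ∀ m, ∀ x ∈ (forceStep E)^[m] S, z x = 0 from h _
  intro m
  induction m with
  | zero => simpa using hS
  | succ m ih =>
      rw [Function.iterate_succ_apply']
      intro x hx
      rcases (mem_forceStep_iff _ _ _).mp hx with hx | ⟨hnx, u, hu, huniq⟩
      · exact ih x hx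
      · exact H _ u x ⟨hnx, hu, huniq⟩ ih

/-- From the restricted closure we can extract a chronological list of forces. -/
lemma exists_chron_of_closureR (E : V → V → Prop) (forbid : V → Prop) (S : Finset V) :
    ∃ l : List (V × V), IsChronList E S l ∧ chainSet S l = zfClosureR E forbid S ∧
      ∀ p ∈ l, ¬(p.1 = p.2 ∧ forbid p.2) := by
  have aux : ∀ (T B : Finset V),
      (∀ v ∈ T, v ∉ B ∧ ∃ u, E u v ∧ (∀ w, E u w → w ∉ B → w = v) ∧ ¬(u = v ∧ forbid v)) →
      (∃ l, IsChronList E S l ∧ chainSet S l = B ∧ ∀ p ∈ l, ¬(p.1 = p.2 ∧ forbid p.2)) →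
      ∃ l, IsChronList E S l ∧ chainSet S l = B ∪ T ∧
        ∀ p ∈ l, ¬(p.1 = p.2 ∧ forbid p.2) := by
    intro T
    induction T using Finset.induction_on with
    | empty => intro B _ h; simpa using h
    | @insert a T haT ih =>
        intro B hT h
        obtain ⟨l, hc, he, hfree⟩ := ih B (fun v hv => hT v (Finset.mem_insert_of_mem hv)) h
        obtain ⟨haB, u, huE, huniq, hforb⟩ := hT a (Finset.mem_insert_self a T)
        refine ⟨l ++ [(u, a)], ?_, ?_, ?_⟩
        · rw [isChronList_snoc]
          refine ⟨hc, ?_, huE, ?_⟩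
          · rw [he]
            simp only [Finset.mem_union, not_or]
            exact ⟨haB, haT⟩
          · intro w hw hwB
            rw [he] at hwB
            exact huniq w hw (fun hwB' => hwB (Finset.mem_union_left _ hwB'))
        · rw [chainSet_snoc, he]
          ext x
          simp only [Finset.mem_insert, Finset.mem_union]
          tauto
        · intro p hp
          rcases List.mem_append.mp hp with hp | hp
          · exact hfree p hp
          · simp at hp
            subst hp
            exact hforb
  suffices h : ∀ m, ∃ l, IsChronList E S l ∧ chainSet S l = (forceStepR E forbid)^[m] S ∧
      ∀ p ∈ l, ¬(p.1 = p.2 ∧ forbid p.2) from h _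
  intro m
  induction m with
  | zero => exact ⟨[], isChronList_nil, chainSet_nil S, by simp⟩
  | succ m ih =>
      rw [Function.iterate_succ_apply']
      set B := (forceStepR E forbid)^[m] S with hB
      have hstep : forceStepR E forbid B = B ∪ (univ.filter fun v => v ∉ B ∧
          ∃ u, E u v ∧ (∀ w, E u w → w ∉ B → w = v) ∧ ¬(u = v ∧ forbid v)) := by
        ext v
        simp [forceStepR]
      rw [hstep]
      exact aux _ B (fun v hv => by simpa using (Finset.mem_filter.mp hv).2) ih

end Chron

section Rank

open Matrix in
lemma rank_eq_card_iff_vecMul {K : Type*} [Field K] {p : ℕ} {ι : Type*} [Fintype ι]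
    (M : Matrix (Fin p) ι K) :
    M.rank = p ↔ ∀ z : Fin p → K, Matrix.vecMul z M = 0 → z = 0 := by
  rw [← Matrix.rank_transpose]
  have hrn := LinearMap.finrank_range_add_finrank_ker (Mᵀ.mulVecLin)
  rw [Module.finrank_pi, Fintype.card_fin] at hrn
  have hrank : Mᵀ.rank = Module.finrank K (LinearMap.range Mᵀ.mulVecLin) := rfl
  have hmv : ∀ z : Fin p → K, Mᵀ.mulVecLin z = Matrix.vecMul z M := by
    intro z
    rw [Matrix.mulVecLin_apply, Matrix.mulVec_transpose]
  constructor
  · intro h z hz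
    have hker0 : Module.finrank K (LinearMap.ker Mᵀ.mulVecLin) = 0 := by omega
    have hker : LinearMap.ker Mᵀ.mulVecLin = ⊥ :=
      (Submodule.finrank_eq_zero (R := K)).mp hker0
    exact LinearMap.ker_eq_bot'.mp hker z (by rw [hmv]; exact hz)
  · intro h
    have hker : LinearMap.ker Mᵀ.mulVecLin = ⊥ := by
      rw [LinearMap.ker_eq_bot']
      intro z hz
      exact h z (by rw [← hmv]; exact hz)
    have h0 : Module.finrank K (LinearMap.ker Mᵀ.mulVecLin) = 0 := by
      rw [hker]
      exact finrank_bot K _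
    omega

end Rank

section CH

lemma vecMul_sum_matrix {p q : ℕ} {ι : Type*} (s : Finset ι) (f : ι → Matrix (Fin p) (Fin q) ℂ)
    (z : Fin p → ℂ) :
    Matrix.vecMul z (∑ i ∈ s, f i) = ∑ i ∈ s, Matrix.vecMul z (f i) := by
  ext j
  simp [Matrix.vecMul, dotProduct, Matrix.sum_apply, Finset.mul_sum]
  rw [Finset.sum_comm]

lemma vecMul_smul_matrix {p q : ℕ} (c : ℂ) (M : Matrix (Fin p) (Fin q) ℂ) (z : Fin p → ℂ) :
    Matrix.vecMul z (c • M) = c • Matrix.vecMul z M := by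
  ext j
  simp [Matrix.vecMul, dotProduct, Finset.mul_sum]
  congr 1
  ext i
  ring

lemma vecMul_pow_all {p q : ℕ} (Ac : Matrix (Fin p) (Fin p) ℂ) (Bc : Matrix (Fin p) (Fin q) ℂ)
    (z : Fin p → ℂ) (h : ∀ k < p, Matrix.vecMul z (Ac ^ k * Bc) = 0) :
    ∀ k, Matrix.vecMul z (Ac ^ k * Bc) = 0 := by
  rcases Nat.eq_zero_or_pos p with hp | hp
  · intro k
    ext j
    subst hp
    simp [Matrix.vecMul, dotProduct]
  · have hmonic := Ac.charpoly_monic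
    have hdeg : Ac.charpoly.natDegree = p := by
      rw [Matrix.charpoly_natDegree_eq_dim, Fintype.card_fin]
    have hzero := Ac.aeval_self_charpoly
    rw [Polynomial.aeval_eq_sum_range, hdeg, Finset.sum_range_succ] at hzero
    have hlead : Ac.charpoly.coeff p = 1 := by
      have := hmonic.coeff_natDegree
      rwa [hdeg] at this
    rw [hlead, one_smul] at hzero
    have hAn : Ac ^ p = ∑ i ∈ Finset.range p, (-(Ac.charpoly.coeff i)) • Ac ^ i := by
      have : (∑ i ∈ Finset.range p, Ac.charpoly.coeff i • Ac ^ i) + Ac ^ p = 0 := hzero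
      rw [← neg_eq_of_add_eq_zero_right this, ← Finset.sum_neg_distrib]
      congr 1
      ext i : 1
      rw [neg_smul]
    intro k
    induction k using Nat.strong_induction_on with
    | _ k ih =>
        rcases lt_or_ge k p with hk | hk
        · exact h k hk
        · have hsplit : Ac ^ k = Ac ^ (k - p) * Ac ^ p := by
            rw [← pow_add]
            congr 1
            omega
          rw [hsplit, hAn, Matrix.mul_sum, Matrix.sum_mul, vecMul_sum_matrix]
          refine Finset.sum_eq_zero fun i hi => ?_
          have hi' := Finset.mem_range.mp hi
          rw [Matrix.mul_smul, Matrix.smul_mul, vecMul_smul_matrix, ← pow_add,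
            ih (k - p + i) (by omega)]
          simp

end CH


section Backward

lemma scontrollable_of_conditions {n : ℕ} (A : Fin n → Fin n → Prop) (S : Finset (Fin n))
    (h1 : zfClosure (fun u v => A v u) S = Finset.univ)
    (l : List (Fin n × Fin n))
    (hl : IsChronList (fun u v => A v u ∨ u = v) S l)
    (hcover : chainSet S l = Finset.univ)
    (hfree : ∀ p ∈ l, ¬(p.1 = p.2 ∧ A p.2 p.2)) :
    SControllable A (BS S) := by
  rintro At Bt ⟨hA, hB⟩
  unfold Controllable
  by_contra hr
  set K : Matrix (Fin n) (Fin n × Fin S.card) ℝ :=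
    Matrix.of fun i p => (At ^ (p.1 : ℕ) * Bt) i p.2 with hK
  obtain ⟨z, hz0, hzK⟩ : ∃ z : Fin n → ℝ, z ≠ 0 ∧ Matrix.vecMul z K = 0 := by
    by_contra hc
    push_neg at hc
    exact hr ((rank_eq_card_iff_vecMul K).mpr
      (fun z hz => by_contra fun h0 => (hc z h0) hz))
  set Ac : Matrix (Fin n) (Fin n) ℂ := At.map (⇑Complex.ofRealHom) with hAc
  set Bc : Matrix (Fin n) (Fin S.card) ℂ := Bt.map (⇑Complex.ofRealHom) with hBc
  set zc : Fin n → ℂ := fun i => (z i : ℂ) with hzc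
  have hpow : ∀ k : ℕ, Ac ^ k = (At ^ k).map (⇑Complex.ofRealHom) := by
    intro k
    rw [hAc, ← RingHom.mapMatrix_apply, ← RingHom.mapMatrix_apply, map_pow]
  have hAB : ∀ k : ℕ, Ac ^ k * Bc = (At ^ k * Bt).map (⇑Complex.ofRealHom) := by
    intro k
    rw [Matrix.map_mul, hpow k, hBc]
  have hkall0 : ∀ k < n, Matrix.vecMul zc (Ac ^ k * Bc) = 0 := by
    intro k hk
    ext j
    have hzKe := congrFun hzK (⟨k, hk⟩, j)
    simp only [Matrix.vecMul, dotProduct, hK, Matrix.of_apply, Pi.zero_apply] at hzKe ⊢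
    rw [hAB k]
    simp only [Matrix.map_apply, Complex.ofRealHom_eq_coe]
    have hcast : ((∑ x, z x * (At ^ k * Bt) x j : ℝ) : ℂ)
        = ∑ x, zc x * ((At ^ k * Bt) x j : ℂ) := by
      push_cast [hzc]
      rfl
    rw [← hcast, hzKe, Complex.ofReal_zero]
  have hall : ∀ k, Matrix.vecMul zc (Ac ^ k * Bc) = 0 := vecMul_pow_all Ac Bc zc hkall0
  -- the invariant subspace
  set W : Submodule ℂ (Fin n → ℂ) :=
    { carrier := {w | ∀ k, Matrix.vecMul w (Ac ^ k * Bc) = 0}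
      zero_mem' := fun k => Matrix.zero_vecMul _
      add_mem' := fun ha hb k => by
        rw [Matrix.add_vecMul, ha k, hb k, add_zero]
      smul_mem' := fun c w hw k => by
        rw [Matrix.smul_vecMul, hw k, smul_zero] } with hW
  have hzcW : zc ∈ W := hall
  have hzcne : zc ≠ 0 := by
    intro h
    apply hz0
    funext i
    have := congrFun h i
    simpa [hzc] using this
  haveI : Nontrivial W := nontrivial_of_ne ⟨zc, hzcW⟩ 0 (by
    intro h
    exact hzcne (by simpa [Subtype.ext_iff] using h))
  set f : Module.End ℂ W :=
    { toFun := fun w => ⟨Matrix.vecMul (w : Fin n → ℂ) Ac, fun k => by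
        rw [Matrix.vecMul_vecMul, ← Matrix.mul_assoc, ← pow_succ']
        exact w.2 (k + 1)⟩
      map_add' := fun a b => Subtype.ext (by
        simpa using Matrix.add_vecMul Ac (a : Fin n → ℂ) (b : Fin n → ℂ))
      map_smul' := fun c w => Subtype.ext (by
        simpa using Matrix.smul_vecMul c (w : Fin n → ℂ) Ac) } with hf
  obtain ⟨μ, hμ⟩ := Module.End.exists_eigenvalue f
  obtain ⟨w, hw⟩ := hμ.exists_hasEigenvector
  have hweq : Matrix.vecMul (w : Fin n → ℂ) Ac = μ • (w : Fin n → ℂ) := by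
    have := hw.apply_eq_smul
    have h2 := congrArg (Subtype.val) this
    simpa [hf] using h2
  have hwne : (w : Fin n → ℂ) ≠ 0 := by
    intro h
    exact hw.right (Subtype.ext (by rw [h]; rfl))
  have hwB : Matrix.vecMul (w : Fin n → ℂ) Bc = 0 := by
    have := w.2 0
    simpa [pow_zero, Matrix.one_mul] using this
  have hS0 : ∀ i ∈ S, (w : Fin n → ℂ) i = 0 := by
    intro i hi
    set j := (S.orderIsoOfFin rfl).symm ⟨i, hi⟩ with hj
    have hcol := congrFun hwB j
    simp only [Matrix.vecMul, dotProduct, Pi.zero_apply] at hcol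
    have hiso : ((S.orderIsoOfFin rfl) j : Fin n) = i := by
      rw [hj, OrderIso.apply_symm_apply]
    rw [Finset.sum_eq_single i] at hcol
    · have hBij : Bc i j ≠ 0 := by
        simp only [hBc, Matrix.map_apply, Complex.ofRealHom_eq_coe, Ne,
          Complex.ofReal_eq_zero]
        exact (hB i j).mpr hiso
      rcases mul_eq_zero.mp hcol with h | h
      · exact h
      · exact absurd h hBij
    · intro x _ hxi
      have hBx : Bt x j = 0 := by
        by_contra hbx
        exact hxi (((hB x j).mp hbx) ▸ hiso ▸ rfl)
      simp [hBc, Matrix.map_apply, hBx]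
    · intro h
      exact absurd (Finset.mem_univ i) h
  by_cases hmu : μ = 0
  · -- the zero forcing set condition kills w
    have hAc0 : Matrix.vecMul (w : Fin n → ℂ) Ac = 0 := by
      rw [hweq, hmu, zero_smul]
    have Hv : ∀ (B : Finset (Fin n)) (u v : Fin n),
        ValidForce (fun u v => A v u) B u v → (∀ x ∈ B, (w : Fin n → ℂ) x = 0) →
        (w : Fin n → ℂ) v = 0 := by
      rintro B u v ⟨hvB, hEuv, huniq⟩ hvan
      have hcol := congrFun hAc0 u
      simp only [Matrix.vecMul, dotProduct, Pi.zero_apply] at hcol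
      rw [Finset.sum_eq_single v] at hcol
      · have hAvu : Ac v u ≠ 0 := by
          simp only [hAc, Matrix.map_apply, Complex.ofRealHom_eq_coe, Ne,
            Complex.ofReal_eq_zero]
          exact (hA v u).mpr hEuv
        rcases mul_eq_zero.mp hcol with h | h
        · exact h
        · exact absurd h hAvu
      · intro x _ hxv
        by_cases hxB : x ∈ B
        · rw [hvan x hxB, zero_mul]
        · have : ¬ A x u := fun hax => hxv (huniq x hax hxB)
          have : At x u = 0 := by
            by_contra hat
            exact this ((hA x u).mp hat)
          simp [hAc, Matrix.map_apply, this]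
      · intro h
        exact absurd (Finset.mem_univ v) h
    have : ∀ x ∈ zfClosure (fun u v => A v u) S, (w : Fin n → ℂ) x = 0 :=
      vanish_zfClosure Hv hS0
    apply hwne
    funext x
    exact this x (h1 ▸ Finset.mem_univ x)
  · -- the chronological list kills w
    set Mc : Matrix (Fin n) (Fin n) ℂ :=
      fun x u => Ac x u - μ * (if x = u then 1 else 0) with hMc
    have hcolM : ∀ u, ∑ x, (w : Fin n → ℂ) x * Mc x u = 0 := by
      intro u
      have h1' : ∑ x, (w : Fin n → ℂ) x * Ac x u = μ * (w : Fin n → ℂ) u := by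
        have := congrFun hweq u
        simpa [Matrix.vecMul, dotProduct, Pi.smul_apply, smul_eq_mul] using this
      have h2' : ∑ x, (w : Fin n → ℂ) x * (μ * (if x = u then 1 else 0))
          = μ * (w : Fin n → ℂ) u := by
        rw [Finset.sum_congr rfl (fun x _ => show (w : Fin n → ℂ) x * (μ * (if x = u then 1 else 0)) = (if x = u then (w : Fin n → ℂ) x * μ else 0) from by
          by_cases h : x = u <;> simp [h])]
        rw [Finset.sum_ite_eq' Finset.univ u (fun x => (w : Fin n → ℂ) x * μ)]
        simp [mul_comm]
      simp only [hMc, mul_sub]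
      rw [Finset.sum_sub_distrib, h1', h2', sub_self]
    have Hv : ∀ (B : Finset (Fin n)) (u v : Fin n),
        ValidForce (fun u v => A v u ∨ u = v) B u v → ¬(u = v ∧ A v v) →
        (∀ x ∈ B, (w : Fin n → ℂ) x = 0) → (w : Fin n → ℂ) v = 0 := by
      rintro B u v ⟨hvB, hEuv, huniq⟩ hnf hvan
      have hcol := hcolM u
      rw [Finset.sum_eq_single v] at hcol
      · have hMvu : Mc v u ≠ 0 := by
          by_cases hvu : v = u
          · subst hvu
            have hnAvv : ¬ A v v := fun hvv => hnf ⟨rfl, hvv⟩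
            have hAt : At v v = 0 := by
              by_contra hat
              exact hnAvv ((hA v v).mp hat)
            simp [hMc, hAc, Matrix.map_apply, hAt, hmu]
          · have hAvu : A v u := by
              rcases hEuv with h | h
              · exact h
              · exact absurd h.symm hvu
            have hAt : At v u ≠ 0 := (hA v u).mpr hAvu
            simp [hMc, hAc, Matrix.map_apply, hvu, hAt]
        rcases mul_eq_zero.mp hcol with h | h
        · exact h
        · exact absurd h hMvu
      · intro x _ hxv
        by_cases hxB : x ∈ B
        · rw [hvan x hxB, zero_mul]
        · have hnE : ¬ (A x u ∨ u = x) := fun hE => hxv (huniq x hE hxB)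
          push_neg at hnE
          have hAt : At x u = 0 := by
            by_contra hat
            exact hnE.1 ((hA x u).mp hat)
          have hxu : x ≠ u := fun h => hnE.2 h.symm
          simp [hMc, hAc, Matrix.map_apply, hAt, hxu]
      · intro h
        exact absurd (Finset.mem_univ v) h
    have : ∀ x ∈ chainSet S l, (w : Fin n → ℂ) x = 0 :=
      vanish_chainSet (forbid := fun v => A v v) Hv hl hfree hS0
    apply hwne
    funext x
    exact this x (hcover ▸ Finset.mem_univ x)

end Backward

section Forward

lemma not_scontrollable_of_stalled {n : ℕ} (A : Fin n → Fin n → Prop) (S : Finset (Fin n))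
    (lam : ℝ) (hlam : lam = 0 ∨ lam = 1) (R : Finset (Fin n)) (hSR : S ⊆ R)
    (hRne : R ≠ Finset.univ)
    (hstall : ∀ u v : Fin n, v ∉ R → (A v u ∨ (u = v ∧ lam = 1)) →
      (∀ w, (A w u ∨ (u = w ∧ lam = 1)) → w ∉ R → w = v) → (u = v ∧ lam = 1 ∧ A v v)) :
    ¬ SControllable A (BS S) := by
  classical
  set N : Fin n → Finset (Fin n) := fun u => Finset.univ.filter
    (fun w => w ∉ R ∧ (A w u ∨ (u = w ∧ lam = 1))) with hN
  have hmemN : ∀ u w, w ∈ N u ↔ (w ∉ R ∧ (A w u ∨ (u = w ∧ lam = 1))) := by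
    intro u w
    simp [hN]
  have hsingle : ∀ u, (N u).card = 1 → N u = {u} ∧ A u u ∧ lam = 1 := by
    intro u hc
    obtain ⟨v, hv⟩ := Finset.card_eq_one.mp hc
    have hvm : v ∈ N u := by rw [hv]; exact Finset.mem_singleton_self v
    rw [hmemN] at hvm
    have huniq : ∀ w, (A w u ∨ (u = w ∧ lam = 1)) → w ∉ R → w = v := by
      intro w hw hwR
      have : w ∈ N u := (hmemN u w).mpr ⟨hwR, hw⟩
      rw [hv] at this
      exact Finset.mem_singleton.mp this
    obtain ⟨huv, hl1, hAvv⟩ := hstall u v hvm.1 hvm.2 huniq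
    subst huv
    exact ⟨hv, hAvv, hl1⟩
  have hpickex : ∀ u, 2 ≤ (N u).card → ((N u).erase u).Nonempty := by
    intro u h2
    rw [← Finset.card_pos]
    have h1 := Finset.pred_card_le_card_erase (s := N u) (a := u)
    omega
  set pick : Fin n → Fin n := fun u =>
    if h : ((N u).erase u).Nonempty then h.choose else u with hpick
  have hpickmem : ∀ u, 2 ≤ (N u).card → pick u ∈ (N u).erase u := by
    intro u h2
    have h := hpickex u h2
    simp only [hpick, dif_pos h]
    exact h.choose_spec
  set delta : Fin n → ℝ := fun u => if u ∈ N u then (if A u u then 1 else -lam) else 0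
    with hdelta
  set kk : Fin n → ℕ := fun u => (((N u).erase u).erase (pick u)).card with hkk
  set tt : Fin n → ℝ := fun u => if delta u + (kk u : ℝ) = 0 then 2 else 1 with htt
  have htne : ∀ u, tt u ≠ 0 := by
    intro u
    simp only [htt]
    split <;> norm_num
  have hdne : ∀ u, u ∈ N u → delta u ≠ 0 := by
    intro u hu
    simp only [hdelta]
    rw [if_pos hu]
    split
    · norm_num
    · rename_i hA'
      rcases ((hmemN u u).mp hu).2 with h | h
      · exact absurd h hA'
      · rw [h.2]; norm_num
  have hsum_ne : ∀ u, 2 ≤ (N u).card → delta u + tt u * (kk u : ℝ) ≠ 0 := by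
    intro u h2
    by_cases hk : kk u = 0
    · have hu : u ∈ N u := by
        by_contra hu
        have he : (N u).erase u = N u := Finset.erase_eq_of_notMem hu
        have hp : pick u ∈ N u := by
          have := hpickmem u h2
          rw [he] at this
          exact this
        have hcard := Finset.card_erase_of_mem hp
        simp only [hkk, he] at hk
        omega
      rw [hk]
      push_cast
      rw [mul_zero, add_zero]
      exact hdne u hu
    · simp only [htt]
      split
      · rename_i h0
        intro hcon
        have : (kk u : ℝ) = 0 := by linarith
        exact hk (by exact_mod_cast this)
      · rename_i h0
        rw [one_mul]
        exact h0
  set colval : Fin n → Fin n → ℝ := fun u w =>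
    if 2 ≤ (N u).card then
      (if w = pick u then -(delta u + tt u * (kk u : ℝ)) else if w = u then delta u else tt u)
    else 0 with hcolval
  set M : Matrix (Fin n) (Fin n) ℝ := fun w u =>
    if w ∈ N u then colval u w
    else if w = u then (if A u u then 1 - lam else -lam) else (if A w u then 1 else 0) with hM
  have hcard2 : ∀ u w, w ∈ N u → w ≠ u → 2 ≤ (N u).card := by
    intro u w hw hwu
    rcases Nat.lt_or_ge (N u).card 2 with hc | hc
    · interval_cases hcc : (N u).card
      · exact absurd hw (by rw [Finset.card_eq_zero.mp hcc]; exact Finset.notMem_empty w)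
      · obtain ⟨hNu, _, _⟩ := hsingle u hcc
        rw [hNu] at hw
        exact absurd (Finset.mem_singleton.mp hw) hwu
    · exact hc
  have hMoff : ∀ w u, w ≠ u → (M w u ≠ 0 ↔ A w u) := by
    intro w u hwu
    simp only [hM]
    by_cases hwN : w ∈ N u
    · rw [if_pos hwN]
      have hAwu : A w u := by
        rcases ((hmemN u w).mp hwN).2 with h | h
        · exact h
        · exact absurd h.1.symm hwu
      have h2 := hcard2 u w hwN hwu
      simp only [hcolval]
      rw [if_pos h2]
      constructor
      · intro _
        exact hAwu
      · intro _
        by_cases hwp : w = pick u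
        · rw [if_pos hwp]
          exact neg_ne_zero.mpr (hsum_ne u h2)
        · rw [if_neg hwp, if_neg hwu]
          exact htne u
    · rw [if_neg hwN, if_neg hwu]
      by_cases hAwu : A w u <;> simp [hAwu]
  have hMdiag : ∀ u, (A u u → M u u ≠ -lam) ∧ (¬A u u → M u u = -lam) := by
    intro u
    have hlamv : lam = 0 ∨ lam = 1 := hlam
    simp only [hM]
    by_cases huN : u ∈ N u
    · rw [if_pos huN]
      simp only [hcolval]
      by_cases h2 : 2 ≤ (N u).card
      · rw [if_pos h2]
        have hpu : u ≠ pick u := fun h => (Finset.ne_of_mem_erase (hpickmem u h2)) h.symm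
        rw [if_neg hpu, if_true]
        simp only [hdelta]
        rw [if_pos huN]
        constructor
        · intro hAuu
          rw [if_pos hAuu]
          rcases hlamv with h | h <;> rw [h] <;> norm_num
        · intro hAuu
          rw [if_neg hAuu]
      · rw [if_neg h2]
        have hc1 : (N u).card = 1 := by
          have : 1 ≤ (N u).card := Finset.card_pos.mpr ⟨u, huN⟩
          omega
        obtain ⟨_, hAuu, hl1⟩ := hsingle u hc1
        constructor
        · intro _
          rw [hl1]
          norm_num
        · intro h
          exact absurd hAuu h
    · rw [if_neg huN, if_true]
      constructor
      · intro hAuu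
        rw [if_pos hAuu]
        intro h
        have : (1 : ℝ) = 0 := by linarith
        norm_num at this
      · intro hAuu
        rw [if_neg hAuu]
  have hWsum : ∀ u, ∑ w ∈ Finset.univ.filter (fun w => w ∉ R), M w u = 0 := by
    intro u
    have hNsub : N u ⊆ Finset.univ.filter (fun w => w ∉ R) := by
      intro w hw
      simp only [Finset.mem_filter, Finset.mem_univ, true_and]
      exact ((hmemN u w).mp hw).1
    rw [← Finset.sum_sdiff hNsub]
    have hout : ∑ w ∈ (Finset.univ.filter (fun w => w ∉ R)) \ N u, M w u = 0 := by
      refine Finset.sum_eq_zero fun w hw => ?_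
      obtain ⟨hwW, hwN⟩ := Finset.mem_sdiff.mp hw
      have hwR : w ∉ R := (Finset.mem_filter.mp hwW).2
      simp only [hM]
      rw [if_neg hwN]
      by_cases hwu : w = u
      · subst hwu
        have hnE : ¬ (A w w ∨ (w = w ∧ lam = 1)) := fun hE => hwN ((hmemN w w).mpr ⟨hwR, hE⟩)
        push_neg at hnE
        have hl0 : lam = 0 := by
          rcases hlam with h | h
          · exact h
          · exact absurd h (hnE.2 rfl)
        rw [if_pos rfl, if_neg hnE.1, hl0, neg_zero]
      · have hnA : ¬ A w u := fun hA' => hwN ((hmemN u w).mpr ⟨hwR, Or.inl hA'⟩)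
        rw [if_neg hwu, if_neg hnA]
    rw [hout, zero_add]
    have hMN : ∀ w ∈ N u, M w u = colval u w := by
      intro w hw
      simp only [hM]
      rw [if_pos hw]
    rw [Finset.sum_congr rfl hMN]
    rcases Nat.lt_or_ge (N u).card 2 with hc | hc
    · refine Finset.sum_eq_zero fun w hw => ?_
      have hn2 : ¬ (2 ≤ (N u).card) := by omega
      simp [hcolval, hn2]
    · have hp := hpickmem u hc
      have hpN : pick u ∈ N u := Finset.mem_of_mem_erase hp
      have hpu : pick u ≠ u := Finset.ne_of_mem_erase hp
      rw [← Finset.sum_erase_add (N u) _ hpN]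
      have hvp : colval u (pick u) = -(delta u + tt u * (kk u : ℝ)) := by
        simp only [hcolval]
        rw [if_pos hc, if_true]
      by_cases huN : u ∈ N u
      · have huep : u ∈ (N u).erase (pick u) := Finset.mem_erase.mpr ⟨fun h => hpu h.symm, huN⟩
        rw [← Finset.sum_erase_add _ _ huep]
        have hvu : colval u u = delta u := by
          simp only [hcolval]
          rw [if_pos hc, if_neg (fun h => hpu h.symm), if_true]
        have hrest : ∀ w ∈ ((N u).erase (pick u)).erase u, colval u w = tt u := by
          intro w hw
          have hw1 : w ≠ u := (Finset.mem_erase.mp hw).1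
          have hw2 : w ≠ pick u := (Finset.mem_erase.mp (Finset.mem_erase.mp hw).2).1
          simp only [hcolval]
          rw [if_pos hc, if_neg hw2, if_neg hw1]
        rw [Finset.sum_congr rfl hrest, Finset.sum_const]
        have hcard : (((N u).erase (pick u)).erase u).card = kk u := by
          simp only [hkk]
          congr 1
          exact Finset.erase_right_comm
        have hup : (u = pick u) = False := eq_false (fun h => hpu h.symm)
        simp only [hcolval, if_pos hc, hup, if_false, eq_self_iff_true, if_true, hcard,
          nsmul_eq_mul]
        ring
      · have hd0 : delta u = 0 := by
          simp only [hdelta]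
          rw [if_neg huN]
        have hrest : ∀ w ∈ (N u).erase (pick u), colval u w = tt u := by
          intro w hw
          have hw2 : w ≠ pick u := (Finset.mem_erase.mp hw).1
          have hw1 : w ≠ u := fun h => huN (by have h2 := Finset.mem_of_mem_erase hw; rwa [h] at h2)
          simp only [hcolval]
          rw [if_pos hc, if_neg hw2, if_neg hw1]
        rw [Finset.sum_congr rfl hrest, Finset.sum_const]
        have hcard : ((N u).erase (pick u)).card = kk u := by
          simp only [hkk]
          rw [Finset.erase_eq_of_notMem huN]
        simp only [hcolval, if_pos hc, eq_self_iff_true, if_true, hcard, nsmul_eq_mul, hd0]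
        ring
  -- the realization
  set At : Matrix (Fin n) (Fin n) ℝ := fun w u => M w u + if w = u then lam else 0 with hAt
  set Bt : Matrix (Fin n) (Fin S.card) ℝ :=
    fun i j => if ((S.orderIsoOfFin rfl j : Fin n)) = i then 1 else 0 with hBt
  have hreal : IsRealization A (BS S) At Bt := by
    constructor
    · intro w u
      simp only [hAt]
      by_cases hwu : w = u
      · subst hwu
        rw [if_pos rfl]
        obtain ⟨h1, h2⟩ := hMdiag w
        by_cases hAww : A w w
        · constructor
          · intro _
            exact hAww
          · intro _ h0
            exact (h1 hAww) (by linarith)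
        · constructor
          · intro h0
            exfalso
            apply h0
            rw [h2 hAww]
            ring
          · intro h
            exact absurd h hAww
      · rw [if_neg hwu, add_zero]
        exact hMoff w u hwu
    · intro i j
      simp only [hBt]
      unfold BS
      split
      · rename_i h
        constructor
        · intro _
          exact h
        · intro _
          norm_num
      · rename_i h
        constructor
        · intro h0
          exact absurd rfl h0
        · intro h1
          exact absurd h1 h
  set z : Fin n → ℝ := fun x => if x ∈ R then 0 else 1 with hz
  have hzne : z ≠ 0 := by
    have : ∃ x, x ∉ R := by
      by_contra hc
      push_neg at hc
      exact hRne (Finset.eq_univ_iff_forall.mpr hc)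
    obtain ⟨x, hx⟩ := this
    intro h0
    have := congrFun h0 x
    rw [hz] at this
    simp only [if_neg hx, Pi.zero_apply] at this
    norm_num at this
  have hzAt : Matrix.vecMul z At = lam • z := by
    funext u
    have hterm : ∀ x, z x * At x u = if x ∉ R then At x u else 0 := by
      intro x
      simp only [hz]
      by_cases h : x ∈ R <;> simp [h]
    calc Matrix.vecMul z At u = ∑ x, z x * At x u := by
          simp [Matrix.vecMul, dotProduct]
      _ = ∑ x, if x ∉ R then At x u else 0 := Finset.sum_congr rfl (fun x _ => hterm x)
      _ = ∑ x ∈ Finset.univ.filter (fun x => x ∉ R), At x u :=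
          (Finset.sum_filter _ _).symm
      _ = (∑ x ∈ Finset.univ.filter (fun x => x ∉ R), M x u)
          + ∑ x ∈ Finset.univ.filter (fun x => x ∉ R), (if x = u then lam else 0) := by
          rw [← Finset.sum_add_distrib]
      _ = lam • z u := by
          rw [hWsum u, zero_add, Finset.sum_ite_eq' _ u (fun _ => lam)]
          simp only [hz]
          simp only [Finset.mem_filter, Finset.mem_univ, true_and, smul_eq_mul]
          by_cases h : u ∈ R <;> simp [h]
  have hzBt : Matrix.vecMul z Bt = 0 := by
    funext j
    have hmem := (S.orderIsoOfFin rfl j).2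
    have hR : ((S.orderIsoOfFin rfl j : Fin n)) ∈ R := hSR hmem
    calc Matrix.vecMul z Bt j = ∑ i, z i * Bt i j := by
          simp [Matrix.vecMul, dotProduct]
      _ = ∑ i, if ((S.orderIsoOfFin rfl j : Fin n)) = i then z i else 0 := by
          refine Finset.sum_congr rfl fun i _ => ?_
          simp only [hBt]
          by_cases h : ((S.orderIsoOfFin rfl j : Fin n)) = i <;>
              simp only [h, if_true, if_false, eq_self_iff_true, mul_one, mul_zero]
      _ = z ((S.orderIsoOfFin rfl j : Fin n)) := by
          rw [Finset.sum_ite_eq _ _ z]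
          simp
      _ = 0 := by
          simp only [hz]
          rw [if_pos hR]
  have hzpow : ∀ k : ℕ, Matrix.vecMul z (At ^ k) = (lam ^ k) • z := by
    intro k
    induction k with
    | zero => simp [Matrix.vecMul_one]
    | succ k ih =>
        rw [pow_succ, ← Matrix.vecMul_vecMul, ih, Matrix.smul_vecMul, hzAt, smul_smul,
          ← pow_succ]
  intro hsc
  have hcont := hsc At Bt hreal
  unfold Controllable at hcont
  have hz0 : Matrix.vecMul z (Matrix.of fun i (p : Fin n × Fin S.card) =>
      (At ^ (p.1 : ℕ) * Bt) i p.2) = 0 := by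
    funext p
    obtain ⟨k, j⟩ := p
    calc Matrix.vecMul z (Matrix.of fun i (p : Fin n × Fin S.card) =>
          (At ^ (p.1 : ℕ) * Bt) i p.2) (k, j) = ∑ i, z i * (At ^ (k : ℕ) * Bt) i j := by
          simp [Matrix.vecMul, dotProduct]
      _ = Matrix.vecMul z (At ^ (k : ℕ) * Bt) j := by
          simp [Matrix.vecMul, dotProduct]
      _ = 0 := by
          rw [← Matrix.vecMul_vecMul, hzpow, Matrix.smul_vecMul, hzBt, smul_zero]
          rfl
  exact hzne ((rank_eq_card_iff_vecMul _).mp hcont z hz0)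

end Forward


/-- zero forcing characterization of strong structural
controllability: `(A, B(S))` is s-controllable iff (1) `S` is a zero forcing
set of `G(A)`, and (2) there is a chronological list of forces from `S` in
`G(A_×)` colouring every vertex black that contains no self-force `x → x` at a
vertex `x` with `A_{xx} = ×`. -/
theorem scontrollable_iff_zero_forcing {n : ℕ} (A : Fin n → Fin n → Prop)
    (S : Finset (Fin n)) :
    SControllable A (BS S) ↔
      zfClosure (fun u v => A v u) S = Finset.univ ∧
      ∃ l : List (Fin n × Fin n),
        IsChronList (fun u v => A v u ∨ u = v) S l ∧
        chainSet S l = Finset.univ ∧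
        ∀ p ∈ l, ¬(p.1 = p.2 ∧ A p.2 p.2) := by
  constructor
  · intro hsc
    constructor
    · by_contra hne
      have hfix : forceStep (fun u v => A v u) (zfClosure (fun u v => A v u) S)
          = zfClosure (fun u v => A v u) S :=
        iterate_fix (subset_forceStep (fun u v => A v u)) S
      have hSR : S ⊆ zfClosure (fun u v => A v u) S :=
        subset_iterate (subset_forceStep (fun u v => A v u)) S _
      refine absurd hsc (not_scontrollable_of_stalled A S 0 (Or.inl rfl)
        (zfClosure (fun u v => A v u) S) hSR hne ?_)
      intro u v hvR hedge huniq
      exfalso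
      have hAvu : A v u := by
        rcases hedge with h | h
        · exact h
        · norm_num at h
      have hvmem : v ∈ forceStep (fun u v => A v u) (zfClosure (fun u v => A v u) S) := by
        rw [mem_forceStep_iff]
        right
        exact ⟨hvR, u, hAvu, fun w hw hwR => huniq w (Or.inl hw) hwR⟩
      rw [hfix] at hvmem
      exact hvR hvmem
    · by_contra h2
      have hRne : zfClosureR (fun u v => A v u ∨ u = v) (fun v => A v v) S
          ≠ Finset.univ := by
        intro he
        obtain ⟨l, hch, hcov, hfree⟩ :=
          exists_chron_of_closureR (fun u v => A v u ∨ u = v) (fun v => A v v) S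
        exact h2 ⟨l, hch, by rw [hcov]; exact he, hfree⟩
      have hfix : forceStepR (fun u v => A v u ∨ u = v) (fun v => A v v)
          (zfClosureR (fun u v => A v u ∨ u = v) (fun v => A v v) S)
          = zfClosureR (fun u v => A v u ∨ u = v) (fun v => A v v) S :=
        iterate_fix (subset_forceStepR _ _) S
      have hSR : S ⊆ zfClosureR (fun u v => A v u ∨ u = v) (fun v => A v v) S :=
        subset_iterate (subset_forceStepR _ _) S _
      refine absurd hsc (not_scontrollable_of_stalled A S 1 (Or.inr rfl)
        (zfClosureR (fun u v => A v u ∨ u = v) (fun v => A v v) S) hSR hRne ?_)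
      intro u v hvR hedge huniq
      have hedge' : A v u ∨ u = v := by
        rcases hedge with h | h
        · exact Or.inl h
        · exact Or.inr h.1
      by_cases hforb : u = v ∧ A v v
      · exact ⟨hforb.1, rfl, hforb.2⟩
      · exfalso
        have hvmem : v ∈ forceStepR (fun u v => A v u ∨ u = v) (fun v => A v v)
            (zfClosureR (fun u v => A v u ∨ u = v) (fun v => A v v) S) := by
          rw [mem_forceStepR_iff]
          right
          refine ⟨hvR, u, hedge', ?_, hforb⟩
          intro w hw hwR
          refine huniq w ?_ hwR
          rcases hw with h | h
          · exact Or.inl h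
          · exact Or.inr ⟨h, rfl⟩
        rw [hfix] at hvmem
        exact hvR hvmem
  · rintro ⟨h1, l, hl, hcov, hfree⟩
    exact scontrollable_of_conditions A S h1 l hl hcov hfree
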